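/- The star chromatic index of the complete bipartite graph K_{n,n} is at most χ'_s(K_n) + n. -/

import Mathlib

open SimpleGraph

/-- A star edge-coloring: proper (adjacent distinct edges get different colors),
and no path with 4 edges nor 4-cycle uses at most two colors. -/
def IsStarEdgeColoring {V α : Type*} (G : SimpleGraph V) (c : Sym2 V → α) : Prop :=
  (∀ e₁ ∈ G.edgeSet, ∀ e₂ ∈ G.edgeSet, e₁ ≠ e₂ → (∃ v, v ∈ e₁ ∧ v ∈ e₂) → c e₁ ≠ c e₂) ∧
  (∀ (u v : V) (p : G.Walk u v), p.IsPath → p.length = 4 →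
      ¬ ∃ a b : α, ∀ e ∈ p.edges, c e = a ∨ c e = b) ∧
  (∀ (u : V) (p : G.Walk u u), p.IsCycle → p.length = 4 →
      ¬ ∃ a b : α, ∀ e ∈ p.edges, c e = a ∨ c e = b)

/-- The star chromatic index. -/
noncomputable def starChromaticIndex {V : Type*} (G : SimpleGraph V) : ℕ :=
  sInf {k | ∃ c : Sym2 V → Fin k, IsStarEdgeColoring G c}

lemma sym2_ne {α : Type*} {a b c d : α} (h1 : ¬(a = c ∧ b = d)) (h2 : ¬(a = d ∧ b = c)) :
    s(a, b) ≠ s(c, d) := by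
  intro h; rw [Sym2.eq_iff] at h; tauto

/-- destructure a walk of length 4 -/
lemma walk4_aux {V : Type*} {G : SimpleGraph V} {u v : V} (p : G.Walk u v) (h : p.length = 4) :
    ∃ (w1 w2 w3 : V) (h1 : G.Adj u w1) (h2 : G.Adj w1 w2) (h3 : G.Adj w2 w3) (h4 : G.Adj w3 v),
      p = .cons h1 (.cons h2 (.cons h3 (.cons h4 .nil))) := by
  cases p with
  | nil => simp at h
  | cons h1 q =>
  cases q with
  | nil => simp at h
  | cons h2 r =>
  cases r with
  | nil => simp at h
  | cons h3 s =>
  cases s with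
  | nil => simp at h
  | cons h4 t =>
  cases t with
  | nil => exact ⟨_, _, _, h1, h2, h3, h4, rfl⟩
  | cons h5 x => simp [SimpleGraph.Walk.length_cons] at h

lemma star_of_inj {V α : Type*} (G : SimpleGraph V) (c : Sym2 V → α)
    (hc : Function.Injective c) : IsStarEdgeColoring G c := by
  have key : ∀ (u v : V) (p : G.Walk u v), p.edges.Nodup → p.length = 4 →
      ¬ ∃ a b : α, ∀ e ∈ p.edges, c e = a ∨ c e = b := by
    rintro u v p hnd hl ⟨a, b, hab⟩
    obtain ⟨w1, w2, w3, h1, h2, h3, h4, rfl⟩ := walk4_aux p hl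
    simp only [SimpleGraph.Walk.edges_cons, SimpleGraph.Walk.edges_nil, List.nodup_cons,
      List.mem_cons, List.mem_singleton, List.not_mem_nil, not_or] at hnd
    obtain ⟨⟨ne01, ne02, -, -⟩, ⟨ne12, -, -⟩, -⟩ := hnd
    have c0 := hab s(u, w1) (by simp)
    have c1 := hab s(w1, w2) (by simp)
    have c2 := hab s(w2, w3) (by simp)
    rcases c0 with c0 | c0 <;> rcases c1 with c1 | c1 <;> rcases c2 with c2 | c2
    all_goals first
      | exact ne01 (hc (c0.trans c1.symm))
      | exact ne02 (hc (c0.trans c2.symm))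
      | exact ne12 (hc (c1.trans c2.symm))
  exact ⟨fun e1 _ e2 _ hne _ h => hne (hc h),
    fun u v p hp => key u v p hp.isTrail.edges_nodup,
    fun u p hp => key u u p hp.isTrail.edges_nodup⟩

lemma alt4 {α : Type*} {x0 x1 x2 x3 a b : α}
    (h0 : x0 = a ∨ x0 = b) (h1 : x1 = a ∨ x1 = b) (h2 : x2 = a ∨ x2 = b)
    (h3 : x3 = a ∨ x3 = b) (n01 : x0 ≠ x1) (n12 : x1 ≠ x2) (n23 : x2 ≠ x3) :
    x0 = x2 ∧ x1 = x3 := by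
  rcases h0 with h0 | h0 <;> rcases h1 with h1 | h1 <;> rcases h2 with h2 | h2 <;>
    rcases h3 with h3 | h3 <;> simp_all

lemma key_path {n k : ℕ} {c : Sym2 (Fin n) → Fin k}
    (hc : IsStarEdgeColoring (⊤ : SimpleGraph (Fin n)) c)
    (i0 j1 i2 j3 i4 : Fin n)
    (h01 : i0 ≠ j1) (h12 : j1 ≠ i2) (h23 : i2 ≠ j3) (h34 : j3 ≠ i4)
    (hi02 : i0 ≠ i2) (hi04 : i0 ≠ i4) (hi24 : i2 ≠ i4) (hj13 : j1 ≠ j3)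
    (E02 : c s(i0, j1) = c s(i2, j3)) (E13 : c s(j1, i2) = c s(j3, i4)) : False := by
  have prop := hc.1
  by_cases h03 : i0 = j3
  · refine prop s(i0, j1) (by simp [h01]) s(i2, j3) (by simp [h23])
      (sym2_ne ?_ ?_) ⟨i0, by simp, by rw [Sym2.mem_iff]; exact Or.inr h03⟩ E02
    · exact fun h => hi02 h.1
    · subst h03; exact fun h => h12 h.2
  by_cases h14 : j1 = i4
  · refine prop s(j1, i2) (by simp [h12]) s(j3, i4) (by simp [h34])
      (sym2_ne ?_ ?_) ⟨j1, by simp, by rw [Sym2.mem_iff]; exact Or.inr h14⟩ E13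
    · exact fun h => hj13 h.1
    · subst h14; exact fun h => h23 h.2
  · have a01 : (⊤ : SimpleGraph (Fin n)).Adj i0 j1 := by simp [h01]
    have a12 : (⊤ : SimpleGraph (Fin n)).Adj j1 i2 := by simp [h12]
    have a23 : (⊤ : SimpleGraph (Fin n)).Adj i2 j3 := by simp [h23]
    have a34 : (⊤ : SimpleGraph (Fin n)).Adj j3 i4 := by simp [h34]
    refine hc.2.1 i0 i4
      (.cons a01 (.cons a12 (.cons a23 (.cons a34 .nil)))) ?_ rfl
      ⟨c s(i0, j1), c s(j1, i2), ?_⟩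
    · rw [SimpleGraph.Walk.isPath_def]
      simp only [SimpleGraph.Walk.support_cons, SimpleGraph.Walk.support_nil,
        List.nodup_cons, List.mem_cons, List.mem_singleton, List.not_mem_nil, not_or]
      refine ⟨⟨h01, hi02, h03, hi04, ?_⟩, ⟨h12, hj13, h14, ?_⟩,
        ⟨h23, hi24, ?_⟩, ⟨h34, ?_⟩, ?_, ?_⟩ <;> simp
    · intro e he
      simp only [SimpleGraph.Walk.edges_cons, SimpleGraph.Walk.edges_nil, List.mem_cons,
        List.not_mem_nil, List.mem_singleton] at he
      rcases he with rfl | rfl | rfl | rfl | h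
      · exact Or.inl rfl
      · exact Or.inr rfl
      · exact Or.inl E02.symm
      · exact Or.inr E13.symm
      · exact absurd h not_false

lemma key_cycle {n k : ℕ} {c : Sym2 (Fin n) → Fin k}
    (hc : IsStarEdgeColoring (⊤ : SimpleGraph (Fin n)) c)
    (i0 j1 i2 j3 : Fin n)
    (h01 : i0 ≠ j1) (h12 : j1 ≠ i2) (h23 : i2 ≠ j3) (h30 : j3 ≠ i0)
    (hi02 : i0 ≠ i2) (hj13 : j1 ≠ j3)
    (E02 : c s(i0, j1) = c s(i2, j3)) (E13 : c s(j1, i2) = c s(j3, i0)) : False := by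
  have a01 : (⊤ : SimpleGraph (Fin n)).Adj i0 j1 := by simp [h01]
  have a12 : (⊤ : SimpleGraph (Fin n)).Adj j1 i2 := by simp [h12]
  have a23 : (⊤ : SimpleGraph (Fin n)).Adj i2 j3 := by simp [h23]
  have a30 : (⊤ : SimpleGraph (Fin n)).Adj j3 i0 := by simp [h30]
  refine hc.2.2 i0
    (.cons a01 (.cons a12 (.cons a23 (.cons a30 .nil)))) ?_ rfl
    ⟨c s(i0, j1), c s(j1, i2), ?_⟩
  · rw [SimpleGraph.Walk.isCycle_def]
    refine ⟨?_, by simp, ?_⟩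
    · rw [SimpleGraph.Walk.isTrail_def]
      simp only [SimpleGraph.Walk.edges_cons, SimpleGraph.Walk.edges_nil, List.nodup_cons,
        List.mem_cons, List.mem_singleton, List.not_mem_nil, not_or]
      have h01' := h01.symm; have h12' := h12.symm; have h23' := h23.symm
      have h30' := h30.symm; have hi02' := hi02.symm; have hj13' := hj13.symm
      refine ⟨⟨sym2_ne ?_ ?_, sym2_ne ?_ ?_, sym2_ne ?_ ?_, ?_⟩,
        ⟨sym2_ne ?_ ?_, sym2_ne ?_ ?_, ?_⟩, ⟨sym2_ne ?_ ?_, ?_⟩, ?_, ?_⟩ <;>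
        first
          | tauto
          | simp
    · simp only [SimpleGraph.Walk.support_cons, SimpleGraph.Walk.support_nil, List.tail_cons,
        List.nodup_cons, List.mem_cons, List.mem_singleton, List.not_mem_nil, not_or]
      refine ⟨⟨h12, hj13, h01.symm, ?_⟩, ⟨h23, hi02.symm, ?_⟩, ⟨h30, ?_⟩, ?_, ?_⟩ <;> simp
  · intro e he
    simp only [SimpleGraph.Walk.edges_cons, SimpleGraph.Walk.edges_nil, List.mem_cons,
      List.not_mem_nil, List.mem_singleton] at he
    rcases he with rfl | rfl | rfl | rfl | h
    · exact Or.inl rfl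
    · exact Or.inr rfl
    · exact Or.inl E02.symm
    · exact Or.inr E13.symm
    · exact absurd h not_false

/-- The colour of a cross edge. -/
def cv (n k : ℕ) (c : Sym2 (Fin n) → Fin k) (i j : Fin n) : Fin (k + n) :=
  if i = j then ⟨k + i.val, by have := i.isLt; omega⟩
  else ⟨(c s(i, j)).val, by have := (c s(i, j)).isLt; omega⟩

/-- The bipartite colouring. -/
def bc (n k : ℕ) (c : Sym2 (Fin n) → Fin k) : Sym2 (Fin n ⊕ Fin n) → Fin (k + n) :=
  Sym2.lift ⟨fun x y =>
    match x, y with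
    | .inl i, .inr j => cv n k c i j
    | .inr j, .inl i => cv n k c i j
    | .inl i, .inl i' => ⟨k + min i.val i'.val, by have := i.isLt; omega⟩
    | .inr j, .inr j' => ⟨k + min j.val j'.val, by have := j.isLt; omega⟩,
    by
      intro x y
      cases x <;> cases y <;> simp [Nat.min_comm]⟩

lemma cv_matching {n k : ℕ} {c : Sym2 (Fin n) → Fin k} {i j i' j' : Fin n}
    (h : cv n k c i j = cv n k c i' j') (hij : i = j) : i' = j' ∧ i = i' := by
  unfold cv at h
  rw [if_pos hij] at h
  by_cases h' : i' = j'
  · rw [if_pos h'] at h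
    have := congrArg Fin.val h
    simp at this
    exact ⟨h', Fin.ext this⟩
  · rw [if_neg h'] at h
    have := congrArg Fin.val h
    have hlt := (c s(i', j')).isLt
    simp at this
    omega

lemma cv_nonmatching {n k : ℕ} {c : Sym2 (Fin n) → Fin k} {i j i' j' : Fin n}
    (h : cv n k c i j = cv n k c i' j') (hij : i ≠ j) (hij' : i' ≠ j') :
    c s(i, j) = c s(i', j') := by
  unfold cv at h
  rw [if_neg hij, if_neg hij'] at h
  have := congrArg Fin.val h
  simp at this
  exact Fin.ext this

lemma adj_inl {n : ℕ} {i : Fin n} {y : Fin n ⊕ Fin n}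
    (h : (completeBipartiteGraph (Fin n) (Fin n)).Adj (Sum.inl i) y) :
    ∃ j, y = Sum.inr j := by cases y <;> simp_all

lemma adj_inr {n : ℕ} {j : Fin n} {y : Fin n ⊕ Fin n}
    (h : (completeBipartiteGraph (Fin n) (Fin n)).Adj (Sum.inr j) y) :
    ∃ i, y = Sum.inl i := by cases y <;> simp_all

/-- χ'_s(K_{n,n}) ≤ χ'_s(K_n) + n. -/
theorem starChromaticIndex_completeBipartite_le (n : ℕ) :
    starChromaticIndex (completeBipartiteGraph (Fin n) (Fin n)) ≤
      starChromaticIndex (⊤ : SimpleGraph (Fin n)) + n := by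
  have hmem : starChromaticIndex (⊤ : SimpleGraph (Fin n)) ∈
      {k | ∃ c : Sym2 (Fin n) → Fin k, IsStarEdgeColoring (⊤ : SimpleGraph (Fin n)) c} := by
    apply Nat.sInf_mem
    exact ⟨Fintype.card (Sym2 (Fin n)), Fintype.equivFin (Sym2 (Fin n)),
      star_of_inj _ _ (Fintype.equivFin (Sym2 (Fin n))).injective⟩
  set k := starChromaticIndex (⊤ : SimpleGraph (Fin n)) with hk
  obtain ⟨c, hc⟩ := hmem
  set G := completeBipartiteGraph (Fin n) (Fin n) with hG
  -- properness of bc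
  have prop : ∀ e₁ ∈ G.edgeSet, ∀ e₂ ∈ G.edgeSet, e₁ ≠ e₂ →
      (∃ v, v ∈ e₁ ∧ v ∈ e₂) → bc n k c e₁ ≠ bc n k c e₂ := by
    have main : ∀ (i j i' j' : Fin n), s(Sum.inl i, Sum.inr j) ≠ (s(Sum.inl i', Sum.inr j')
        : Sym2 (Fin n ⊕ Fin n)) →
        (i = i' ∨ j = j') → cv n k c i j ≠ cv n k c i' j' := by
      intro i j i' j' hne hsh h
      have hne' : ¬(i = i' ∧ j = j') := by
        rintro ⟨rfl, rfl⟩; exact hne rfl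
      rcases hsh with rfl | rfl
      · -- same left endpoint, j ≠ j'
        have hjj : j ≠ j' := fun h' => hne' ⟨rfl, h'⟩
        by_cases hm : i = j
        · exact hjj (hm.symm.trans (cv_matching h hm).1)
        by_cases hm' : i = j'
        · exact hm (cv_matching h.symm hm').1
        · refine hc.1 s(i, j) (by simp [hm]) s(i, j') (by simp [hm'])
            (sym2_ne ?_ ?_) ⟨i, by simp, by simp⟩ (cv_nonmatching h hm hm')
          · exact fun h' => hjj h'.2
          · exact fun h' => hm' h'.1
      · -- same right endpoint, i ≠ i'
        have hii : i ≠ i' := fun h' => hne' ⟨h', rfl⟩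
        by_cases hm : i = j
        · exact hii (cv_matching h hm).2
        by_cases hm' : i' = j
        · exact hii (cv_matching h.symm hm').2.symm
        · refine hc.1 s(i, j) (by simp [hm]) s(i', j) (by simp [hm'])
            (sym2_ne ?_ ?_) ⟨j, by simp, by simp⟩ (cv_nonmatching h hm hm')
          · exact fun h' => hii h'.1
          · exact fun h' => hm h'.1
    intro e₁ h₁ e₂ h₂ hne hsh
    induction e₁ using Sym2.ind with | _ x y =>
    induction e₂ using Sym2.ind with | _ x' y' =>
    rw [SimpleGraph.mem_edgeSet] at h₁ h₂
    obtain ⟨v, hv1, hv2⟩ := hsh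
    rw [Sym2.mem_iff] at hv1 hv2
    cases x <;> cases y <;> simp [hG] at h₁ <;> cases x' <;> cases y' <;> simp [hG] at h₂
    case inl.inr.inl.inr i j i' j' =>
      refine main i j i' j' hne ?_
      rcases hv1 with rfl | rfl <;> rcases hv2 with h | h <;> simp_all
    case inl.inr.inr.inl i j j' i' =>
      rw [Sym2.eq_swap (a := Sum.inr j')] at hne ⊢
      refine main i j i' j' hne ?_
      rcases hv1 with rfl | rfl <;> rcases hv2 with h | h <;> simp_all
    case inr.inl.inl.inr j i i' j' =>
      rw [Sym2.eq_swap (a := Sum.inr j)] at hne ⊢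
      refine main i j i' j' hne ?_
      rcases hv1 with rfl | rfl <;> rcases hv2 with h | h <;> simp_all
    case inr.inl.inr.inl j i j' i' =>
      rw [Sym2.eq_swap (a := Sum.inr j), Sym2.eq_swap (a := Sum.inr j')] at hne ⊢
      refine main i j i' j' hne ?_
      rcases hv1 with rfl | rfl <;> rcases hv2 with h | h <;> simp_all
  -- edges of G are in the edge set
  have emem : ∀ (i j : Fin n), s(Sum.inl i, Sum.inr j) ∈ G.edgeSet := by
    intro i j; rw [SimpleGraph.mem_edgeSet]; simp [hG]
  have emem' : ∀ (i j : Fin n), s(Sum.inr j, Sum.inl i) ∈ G.edgeSet := by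
    intro i j; rw [SimpleGraph.mem_edgeSet]; simp [hG]
  apply Nat.sInf_le
  refine ⟨bc n k c, prop, ?_, ?_⟩
  · -- no bicoloured path of length 4
    rintro u v p hp hl ⟨a, b, hab⟩
    obtain ⟨w1, w2, w3, h1, h2, h3, h4, rfl⟩ := walk4_aux p hl
    have hnd := hp.support_nodup
    simp only [SimpleGraph.Walk.support_cons, SimpleGraph.Walk.support_nil, List.nodup_cons,
      List.mem_cons, List.mem_singleton, List.not_mem_nil, not_or] at hnd
    obtain ⟨⟨nu1, nu2, nu3, nuv, -⟩, ⟨n12, n13, n1v, -⟩, ⟨n23, n2v, -⟩, ⟨n3v, -⟩, -⟩ := hnd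
    have c0 := hab _ (show s(u, w1) ∈ _ by simp)
    have c1 := hab _ (show s(w1, w2) ∈ _ by simp)
    have c2 := hab _ (show s(w2, w3) ∈ _ by simp)
    have c3 := hab _ (show s(w3, v) ∈ _ by simp)
    cases u with
    | inl i0 =>
      obtain ⟨j1, rfl⟩ := adj_inl h1
      obtain ⟨i2, rfl⟩ := adj_inr h2
      obtain ⟨j3, rfl⟩ := adj_inl h3
      obtain ⟨i4, rfl⟩ := adj_inr h4
      -- distinctness from support nodup
      have ni02 : i0 ≠ i2 := by simpa using nu2
      have ni04 : i0 ≠ i4 := by simpa using nuv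
      have ni24 : i2 ≠ i4 := by simpa using n2v
      have nj13 : j1 ≠ j3 := by simpa using n13
      have d01 : bc n k c s(Sum.inl i0, Sum.inr j1) ≠ bc n k c s(Sum.inr j1, Sum.inl i2) := by
        refine prop _ (emem _ _) _ (emem' _ _) (sym2_ne ?_ ?_) ⟨Sum.inr j1, by simp, by simp⟩
        · rintro ⟨h, -⟩; cases h
        · rintro ⟨h, -⟩; exact ni02 (Sum.inl_injective h)
      have d12 : bc n k c s(Sum.inr j1, Sum.inl i2) ≠ bc n k c s(Sum.inl i2, Sum.inr j3) := by
        refine prop _ (emem' _ _) _ (emem _ _) (sym2_ne ?_ ?_) ⟨Sum.inl i2, by simp, by simp⟩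
        · rintro ⟨h, -⟩; cases h
        · rintro ⟨h, -⟩; exact nj13 (Sum.inr_injective h)
      have d23 : bc n k c s(Sum.inl i2, Sum.inr j3) ≠ bc n k c s(Sum.inr j3, Sum.inl i4) := by
        refine prop _ (emem _ _) _ (emem' _ _) (sym2_ne ?_ ?_) ⟨Sum.inr j3, by simp, by simp⟩
        · rintro ⟨h, -⟩; cases h
        · rintro ⟨h, -⟩; exact ni24 (Sum.inl_injective h)
      obtain ⟨E02, E13⟩ := alt4 c0 c1 c2 c3 d01 d12 d23
      -- translate to cv
      have E02' : cv n k c i0 j1 = cv n k c i2 j3 := E02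
      have E13' : cv n k c i2 j1 = cv n k c i4 j3 := E13
      have m0 : i0 ≠ j1 := fun h => ni02 (cv_matching E02' h).2
      have m2 : i2 ≠ j3 := fun h => ni02 (cv_matching E02'.symm h).2.symm
      have m1 : i2 ≠ j1 := fun h => ni24 (cv_matching E13' h).2
      have m3 : i4 ≠ j3 := fun h => ni24 (cv_matching E13'.symm h).2.symm
      have F02 := cv_nonmatching E02' m0 m2
      have F13 := cv_nonmatching E13' m1 m3
      rw [Sym2.eq_swap (a := i2)] at F13
      rw [Sym2.eq_swap (a := i4)] at F13
      exact key_path hc i0 j1 i2 j3 i4 m0 m1.symm m2 m3.symm ni02 ni04 ni24 nj13 F02 F13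
    | inr j0 =>
      obtain ⟨i1, rfl⟩ := adj_inr h1
      obtain ⟨j2, rfl⟩ := adj_inl h2
      obtain ⟨i3, rfl⟩ := adj_inr h3
      obtain ⟨j4, rfl⟩ := adj_inl h4
      have nj02 : j0 ≠ j2 := by simpa using nu2
      have nj04 : j0 ≠ j4 := by simpa using nuv
      have nj24 : j2 ≠ j4 := by simpa using n2v
      have ni13 : i1 ≠ i3 := by simpa using n13
      have d01 : bc n k c s(Sum.inr j0, Sum.inl i1) ≠ bc n k c s(Sum.inl i1, Sum.inr j2) := by
        refine prop _ (emem' _ _) _ (emem _ _) (sym2_ne ?_ ?_) ⟨Sum.inl i1, by simp, by simp⟩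
        · rintro ⟨h, -⟩; cases h
        · rintro ⟨h, -⟩; exact nj02 (Sum.inr_injective h)
      have d12 : bc n k c s(Sum.inl i1, Sum.inr j2) ≠ bc n k c s(Sum.inr j2, Sum.inl i3) := by
        refine prop _ (emem _ _) _ (emem' _ _) (sym2_ne ?_ ?_) ⟨Sum.inr j2, by simp, by simp⟩
        · rintro ⟨h, -⟩; cases h
        · rintro ⟨h, -⟩; exact ni13 (Sum.inl_injective h)
      have d23 : bc n k c s(Sum.inr j2, Sum.inl i3) ≠ bc n k c s(Sum.inl i3, Sum.inr j4) := by
        refine prop _ (emem' _ _) _ (emem _ _) (sym2_ne ?_ ?_) ⟨Sum.inl i3, by simp, by simp⟩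
        · rintro ⟨h, -⟩; cases h
        · rintro ⟨h, -⟩; exact nj24 (Sum.inr_injective h)
      obtain ⟨E02, E13⟩ := alt4 c0 c1 c2 c3 d01 d12 d23
      have E02' : cv n k c i1 j0 = cv n k c i3 j2 := E02
      have E13' : cv n k c i1 j2 = cv n k c i3 j4 := E13
      have m0 : i1 ≠ j0 := fun h => ni13 (cv_matching E02' h).2
      have m2 : i3 ≠ j2 := fun h => ni13 (cv_matching E02'.symm h).2.symm
      have m1 : i1 ≠ j2 := fun h => ni13 (cv_matching E13' h).2
      have m3 : i3 ≠ j4 := fun h => ni13 (cv_matching E13'.symm h).2.symm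
      have F02 := cv_nonmatching E02' m0 m2
      have F13 := cv_nonmatching E13' m1 m3
      rw [Sym2.eq_swap (a := i1)] at F02
      rw [Sym2.eq_swap (a := i3)] at F02
      exact key_path hc j0 i1 j2 i3 j4 m0.symm m1 m2.symm m3 nj02 nj04 nj24 ni13 F02 F13
  · -- no bicoloured 4-cycle
    rintro u p hp hl ⟨a, b, hab⟩
    obtain ⟨w1, w2, w3, h1, h2, h3, h4, rfl⟩ := walk4_aux p hl
    have hnd := hp.2
    simp only [SimpleGraph.Walk.support_cons, SimpleGraph.Walk.support_nil, List.tail_cons,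
      List.nodup_cons, List.mem_cons, List.mem_singleton, List.not_mem_nil, not_or] at hnd
    obtain ⟨⟨n12, n13, n1u, -⟩, ⟨n23, n2u, -⟩, ⟨n3u, -⟩, -⟩ := hnd
    have c0 := hab _ (show s(u, w1) ∈ _ by simp)
    have c1 := hab _ (show s(w1, w2) ∈ _ by simp)
    have c2 := hab _ (show s(w2, w3) ∈ _ by simp)
    have c3 := hab _ (show s(w3, u) ∈ _ by simp)
    cases u with
    | inl i0 =>
      obtain ⟨j1, rfl⟩ := adj_inl h1
      obtain ⟨i2, rfl⟩ := adj_inr h2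
      obtain ⟨j3, rfl⟩ := adj_inl h3
      have ni02 : i0 ≠ i2 := fun h => n2u (congrArg Sum.inl h.symm)
      have nj13 : j1 ≠ j3 := by simpa using n13
      have d01 : bc n k c s(Sum.inl i0, Sum.inr j1) ≠ bc n k c s(Sum.inr j1, Sum.inl i2) := by
        refine prop _ (emem _ _) _ (emem' _ _) (sym2_ne ?_ ?_) ⟨Sum.inr j1, by simp, by simp⟩
        · rintro ⟨h, -⟩; cases h
        · rintro ⟨h, -⟩; exact ni02 (Sum.inl_injective h)
      have d12 : bc n k c s(Sum.inr j1, Sum.inl i2) ≠ bc n k c s(Sum.inl i2, Sum.inr j3) := by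
        refine prop _ (emem' _ _) _ (emem _ _) (sym2_ne ?_ ?_) ⟨Sum.inl i2, by simp, by simp⟩
        · rintro ⟨h, -⟩; cases h
        · rintro ⟨h, -⟩; exact nj13 (Sum.inr_injective h)
      have d23 : bc n k c s(Sum.inl i2, Sum.inr j3) ≠ bc n k c s(Sum.inr j3, Sum.inl i0) := by
        refine prop _ (emem _ _) _ (emem' _ _) (sym2_ne ?_ ?_) ⟨Sum.inr j3, by simp, by simp⟩
        · rintro ⟨h, -⟩; cases h
        · rintro ⟨h, -⟩; exact ni02 (Sum.inl_injective h).symm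
      obtain ⟨E02, E13⟩ := alt4 c0 c1 c2 c3 d01 d12 d23
      have E02' : cv n k c i0 j1 = cv n k c i2 j3 := E02
      have E13' : cv n k c i2 j1 = cv n k c i0 j3 := E13
      have m0 : i0 ≠ j1 := fun h => ni02 (cv_matching E02' h).2
      have m2 : i2 ≠ j3 := fun h => ni02 (cv_matching E02'.symm h).2.symm
      have m1 : i2 ≠ j1 := fun h => ni02 (cv_matching E13' h).2.symm
      have m3 : i0 ≠ j3 := fun h => ni02 (cv_matching E13'.symm h).2
      have F02 := cv_nonmatching E02' m0 m2
      have F13 := cv_nonmatching E13' m1 m3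
      rw [Sym2.eq_swap (a := i2)] at F13
      rw [Sym2.eq_swap (a := i0)] at F13
      exact key_cycle hc i0 j1 i2 j3 m0 m1.symm m2 m3.symm ni02 nj13 F02 F13
    | inr j0 =>
      obtain ⟨i1, rfl⟩ := adj_inr h1
      obtain ⟨j2, rfl⟩ := adj_inl h2
      obtain ⟨i3, rfl⟩ := adj_inr h3
      have nj02 : j0 ≠ j2 := fun h => n2u (congrArg Sum.inr h.symm)
      have ni13 : i1 ≠ i3 := by simpa using n13
      have d01 : bc n k c s(Sum.inr j0, Sum.inl i1) ≠ bc n k c s(Sum.inl i1, Sum.inr j2) := by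
        refine prop _ (emem' _ _) _ (emem _ _) (sym2_ne ?_ ?_) ⟨Sum.inl i1, by simp, by simp⟩
        · rintro ⟨h, -⟩; cases h
        · rintro ⟨h, -⟩; exact nj02 (Sum.inr_injective h)
      have d12 : bc n k c s(Sum.inl i1, Sum.inr j2) ≠ bc n k c s(Sum.inr j2, Sum.inl i3) := by
        refine prop _ (emem _ _) _ (emem' _ _) (sym2_ne ?_ ?_) ⟨Sum.inr j2, by simp, by simp⟩
        · rintro ⟨h, -⟩; cases h
        · rintro ⟨h, -⟩; exact ni13 (Sum.inl_injective h)
      have d23 : bc n k c s(Sum.inr j2, Sum.inl i3) ≠ bc n k c s(Sum.inl i3, Sum.inr j0) := by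
        refine prop _ (emem' _ _) _ (emem _ _) (sym2_ne ?_ ?_) ⟨Sum.inl i3, by simp, by simp⟩
        · rintro ⟨h, -⟩; cases h
        · rintro ⟨h, -⟩; exact nj02 (Sum.inr_injective h).symm
      obtain ⟨E02, E13⟩ := alt4 c0 c1 c2 c3 d01 d12 d23
      have E02' : cv n k c i1 j0 = cv n k c i3 j2 := E02
      have E13' : cv n k c i1 j2 = cv n k c i3 j0 := E13
      have m0 : i1 ≠ j0 := fun h => ni13 (cv_matching E02' h).2
      have m2 : i3 ≠ j2 := fun h => ni13 (cv_matching E02'.symm h).2.symm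
      have m1 : i1 ≠ j2 := fun h => ni13 (cv_matching E13' h).2
      have m3 : i3 ≠ j0 := fun h => ni13 (cv_matching E13'.symm h).2.symm
      have F02 := cv_nonmatching E02' m0 m2
      have F13 := cv_nonmatching E13' m1 m3
      rw [Sym2.eq_swap (a := i1)] at F02
      rw [Sym2.eq_swap (a := i3)] at F02
      exact key_cycle hc j0 i1 j2 i3 m0.symm m1 m2.symm m3 nj02 ni13 F02 F13
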